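/- arXiv:0910.0531 — 2 statements merged into one kernel-verified Lean document; each statement's English description precedes it below -/
import Mathlib

section
/- For every n ≥ 1 there is a homeomorphism from the reduced suspension S(ℋⁿ, θ) of the n-dimensional Hawaiian earring onto the (n+1)-dimensional Hawaiian earring ℋ^{n+1} that sends the basepoint of S(ℋⁿ, θ) (the class of the collapsed set) to the basepoint θ of ℋ^{n+1}. -/
/-- The `n`-dimensional Hawaiian earring, as a subspace of euclidean `(n+1)`-space. -/
def Hawaiian (n : ℕ) : Set (EuclideanSpace ℝ (Fin (n + 1))) :=
  {x | ∃ k : ℕ, 1 ≤ k ∧ (x 0 - 1 / k) ^ 2 + ∑ i : Fin n, x i.succ ^ 2 = (1 / k) ^ 2}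

/-- The basepoint `θ = (0, …, 0)` of the Hawaiian earring. -/
def hawaiianBase (n : ℕ) : Hawaiian n :=
  ⟨0, 1, le_refl 1, by norm_num⟩

open scoped unitInterval

/-- The setoid collapsing a subset `A` of `Z` to a single point. -/
def collapseSetoid {Z : Type} (A : Set Z) : Setoid Z where
  r a b := a = b ∨ (a ∈ A ∧ b ∈ A)
  iseqv := ⟨fun _ => Or.inl rfl, by aesop, by aesop⟩

/-- The subset `(Z × {0}) ∪ (Z × {1}) ∪ ({z₀} × I)` of `Z × I` which is collapsed to form the
reduced suspension. -/
def suspCollapseSet {Z : Type} (z₀ : Z) : Set (Z × I) :=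
  {p | p.2 = 0 ∨ p.2 = 1 ∨ p.1 = z₀}

/-- The reduced suspension `S(Z, z₀)`: the quotient of `Z × I` collapsing
`(Z × {0}) ∪ (Z × {1}) ∪ ({z₀} × I)` to a point, with the quotient topology. -/
abbrev ReducedSuspension (Z : Type) [TopologicalSpace Z] (z₀ : Z) : Type :=
  Quotient (collapseSetoid (suspCollapseSet z₀))

/-- The basepoint of the reduced suspension: the class of the collapsed set. -/
def reducedSuspensionBase (Z : Type) [TopologicalSpace Z] (z₀ : Z) :
    ReducedSuspension Z z₀ :=
  Quotient.mk _ (z₀, 0)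


namespace HAux
noncomputable section
abbrev E (m : ℕ) := EuclideanSpace ℝ (Fin m)

def Qs {m : ℕ} (x : E m) : ℝ := ∑ i, x i ^ 2

lemma Qs_nonneg {m : ℕ} (x : E m) : 0 ≤ Qs x :=
  Finset.sum_nonneg fun i _ => sq_nonneg _

lemma Qs_eq_zero_iff {m : ℕ} (x : E m) : Qs x = 0 ↔ x = 0 := by
  constructor
  · intro h
    ext i
    have := (Finset.sum_eq_zero_iff_of_nonneg (fun i _ => sq_nonneg (x i))).1 h i (Finset.mem_univ i)
    have := sq_eq_zero_iff.1 this
    simpa using this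
  · intro h; subst h; simp [Qs]

lemma sq_coord_le {m : ℕ} (x : E m) (i : Fin m) : x i ^ 2 ≤ Qs x :=
  Finset.single_le_sum (fun j _ => sq_nonneg (x j)) (Finset.mem_univ i)

lemma abs_coord_le_sqrt {m : ℕ} (x : E m) (i : Fin m) : |x i| ≤ Real.sqrt (Qs x) := by
  rw [← Real.sqrt_sq_eq_abs]
  exact Real.sqrt_le_sqrt (sq_coord_le x i)

lemma Qs_succ {m : ℕ} (x : E (m+1)) : Qs x = x 0 ^ 2 + ∑ i : Fin m, x i.succ ^ 2 := by
  rw [Qs, Fin.sum_univ_succ]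

lemma norm_eq_sqrt_Qs {m : ℕ} (x : E m) : ‖x‖ = Real.sqrt (Qs x) := by
  rw [EuclideanSpace.norm_eq]; unfold Qs
  simp [Real.norm_eq_abs, sq_abs]

lemma mem_hawaiian_iff {m : ℕ} {x : E (m+1)} :
    x ∈ Hawaiian m ↔ ∃ k : ℕ, 1 ≤ k ∧ (k : ℝ) * Qs x = 2 * x 0 := by
  constructor
  · rintro ⟨k, hk, h⟩
    refine ⟨k, hk, ?_⟩
    have hk0 : (k : ℝ) ≠ 0 := Nat.cast_ne_zero.2 (by omega)
    rw [Qs_succ]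
    field_simp at h
    apply mul_left_cancel₀ hk0
    ring_nf
    ring_nf at h
    nlinarith [h]
  · rintro ⟨k, hk, h⟩
    refine ⟨k, hk, ?_⟩
    have hk0 : (k : ℝ) ≠ 0 := Nat.cast_ne_zero.2 (by omega)
    rw [Qs_succ] at h
    field_simp
    nlinarith [h]

def uu (t : ℝ) : ℝ := t * (1 - t)
def bb (t : ℝ) : ℝ := 2 * t - 1
def DD {m : ℕ} (x : E m) (t : ℝ) : ℝ := uu t ^ 2 + bb t ^ 2 * Qs x

def Fm {m : ℕ} (x : E (m+1)) (t : ℝ) : E (m+2) :=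
  WithLp.toLp 2 (Fin.snoc (fun i => x i * (uu t ^ 2 / DD x t)) (bb t * uu t * Qs x / DD x t))

lemma Fm_castSucc {m : ℕ} (x : E (m+1)) (t : ℝ) (i : Fin (m+1)) :
    Fm x t (Fin.castSucc i) = x i * (uu t ^ 2 / DD x t) := by
  simp [Fm]

lemma Fm_last {m : ℕ} (x : E (m+1)) (t : ℝ) :
    Fm x t (Fin.last (m+1)) = bb t * uu t * Qs x / DD x t := by
  simp [Fm]

lemma Fm_zero {m : ℕ} (x : E (m+1)) (t : ℝ) :
    Fm x t 0 = x 0 * (uu t ^ 2 / DD x t) := by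
  rw [show (0 : Fin (m+2)) = Fin.castSucc 0 by simp, Fm_castSucc]

lemma DD_nonneg {m : ℕ} (x : E m) (t : ℝ) : 0 ≤ DD x t := by
  have := Qs_nonneg x
  unfold DD; nlinarith [sq_nonneg (uu t), sq_nonneg (bb t)]

lemma DD_eq_zero_iff {m : ℕ} (x : E m) (t : ℝ) :
    DD x t = 0 ↔ uu t = 0 ∧ x = 0 := by
  unfold DD
  constructor
  · intro h
    have hq := Qs_nonneg x
    have h1 : uu t ^ 2 = 0 ∧ bb t ^ 2 * Qs x = 0 := by
      constructor <;> nlinarith [sq_nonneg (uu t), sq_nonneg (bb t), mul_nonneg (sq_nonneg (bb t)) hq]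
    have hu : uu t = 0 := by
      have := h1.1; exact pow_eq_zero_iff (by norm_num) |>.1 this
    refine ⟨hu, ?_⟩
    have hb : bb t ≠ 0 := by
      rcases mul_eq_zero.1 hu with h0 | h0
      · unfold bb; intro hc; rw [h0] at hc; norm_num at hc
      · unfold bb; intro hc; have : t = 1 := by linarith
        rw [this] at hc; norm_num at hc
    have : Qs x = 0 := by
      rcases mul_eq_zero.1 h1.2 with h0 | h0
      · exact absurd (pow_eq_zero_iff (by norm_num) |>.1 h0) hb
      · exact h0
    exact (Qs_eq_zero_iff x).1 this
  · rintro ⟨hu, hx⟩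
    subst hx
    rw [hu, (Qs_eq_zero_iff 0).2 rfl]
    ring

lemma Qs_Fm {m : ℕ} (x : E (m+1)) (t : ℝ) :
    Qs (Fm x t) = Qs x * uu t ^ 2 / DD x t := by
  have hsum : Qs (Fm x t) = (∑ i : Fin (m+1), (x i * (uu t ^ 2 / DD x t)) ^ 2)
      + (bb t * uu t * Qs x / DD x t) ^ 2 := by
    rw [Qs, Fin.sum_univ_castSucc]
    simp [Fm_castSucc, Fm_last]
  have hsum2 : (∑ i : Fin (m+1), (x i * (uu t ^ 2 / DD x t)) ^ 2)
      = Qs x * (uu t ^ 2 / DD x t) ^ 2 := by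
    rw [Qs, Finset.sum_mul]
    exact Finset.sum_congr rfl fun i _ => by ring
  rw [hsum, hsum2]
  by_cases hD : DD x t = 0
  · rw [hD]; simp
  · have hDD : DD x t = uu t ^ 2 + bb t ^ 2 * Qs x := rfl
    field_simp
    linear_combination (-(Qs x * uu t ^ 2)) * hDD

lemma Fm_mem {m : ℕ} {x : E (m+1)} (hx : x ∈ Hawaiian m) (t : ℝ) :
    Fm x t ∈ Hawaiian (m+1) := by
  rw [mem_hawaiian_iff] at hx ⊢
  obtain ⟨k, hk1, hk⟩ := hx
  refine ⟨k, hk1, ?_⟩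
  rw [Qs_Fm, Fm_zero]
  have h : Qs x * uu t ^ 2 / DD x t = (uu t ^2 / DD x t) * Qs x := by ring
  rw [h]
  linear_combination (uu t ^ 2 / DD x t) * hk

lemma Fm_eq_zero_of_uu {m : ℕ} (x : E (m+1)) {t : ℝ} (ht : uu t = 0) : Fm x t = 0 := by
  ext i
  induction i using Fin.lastCases with
  | last => rw [Fm_last, ht]; simp
  | cast i => rw [Fm_castSucc, ht]; simp

lemma Fm_eq_zero_of_x {m : ℕ} (t : ℝ) : Fm (0 : E (m+1)) t = 0 := by
  have h0 : Qs (0 : E (m+1)) = 0 := (Qs_eq_zero_iff 0).2 rfl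
  ext i
  induction i using Fin.lastCases with
  | last => rw [Fm_last, h0]; simp
  | cast i => rw [Fm_castSucc]; simp [show (0 : E (m+1)) i = 0 from rfl]

lemma continuous_Qs {m : ℕ} : Continuous fun x : E m => Qs x := by
  unfold Qs; exact continuous_finset_sum _ fun i _ => (PiLp.continuous_apply 2 _ i).pow 2

lemma abs_Fm_le {m : ℕ} (x : E (m+1)) (t : ℝ) (i : Fin (m+2)) :
    |Fm x t i| ≤ Real.sqrt (Qs x) := by
  have hQ := Qs_nonneg x
  have hs := Real.sqrt_nonneg (Qs x)
  rcases eq_or_lt_of_le (DD_nonneg x t) with hD | hD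
  · have h1 : Fm x t = 0 := by
      rcases (DD_eq_zero_iff x t).1 hD.symm with ⟨hu, _⟩
      exact Fm_eq_zero_of_uu x hu
    rw [h1]
    simpa using hs
  · induction i using Fin.lastCases with
    | last =>
      rw [Fm_last, abs_div, abs_of_pos hD, div_le_iff₀ hD]
      have ha : Real.sqrt (Qs x) ^ 2 = Qs x := Real.sq_sqrt hQ
      rw [abs_mul, abs_mul, abs_of_nonneg hQ]
      have hDD : DD x t = uu t ^ 2 + bb t ^ 2 * Qs x := rfl
      rw [hDD]
      set a := Real.sqrt (Qs x) with hadef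
      rw [← ha]
      have amgm : 2 * (|uu t| * (|bb t| * a)) ≤ uu t ^ 2 + bb t ^ 2 * a ^ 2 := by
        nlinarith [sq_nonneg (|uu t| - |bb t| * a), sq_abs (uu t), sq_abs (bb t)]
      have h3 : 0 ≤ |uu t| * (|bb t| * a) * a := by positivity
      nlinarith [mul_le_mul_of_nonneg_right amgm hs, h3]
    | cast i =>
      rw [Fm_castSucc, abs_mul]
      have h1 : |x i| ≤ Real.sqrt (Qs x) := abs_coord_le_sqrt x i
      have h2 : |uu t ^ 2 / DD x t| ≤ 1 := by
        rw [abs_div, abs_of_pos hD, div_le_one hD]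
        have : 0 ≤ bb t ^ 2 * Qs x := mul_nonneg (sq_nonneg _) hQ
        have hDD : DD x t = uu t ^ 2 + bb t ^ 2 * Qs x := rfl
        rw [abs_of_nonneg (sq_nonneg (uu t))]; linarith
      calc |x i| * |uu t ^ 2 / DD x t| ≤ Real.sqrt (Qs x) * 1 :=
            mul_le_mul h1 h2 (abs_nonneg _) hs
        _ = Real.sqrt (Qs x) := mul_one _

lemma continuous_Fm {m : ℕ} : Continuous fun p : E (m+1) × ℝ => Fm p.1 p.2 := by
  rw [continuous_iff_continuousAt]
  intro p
  by_cases hD : DD p.1 p.2 = 0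
  · obtain ⟨hu, hx⟩ := (DD_eq_zero_iff p.1 p.2).1 hD
    have hval : Fm p.1 p.2 = 0 := Fm_eq_zero_of_uu _ hu
    rw [ContinuousAt, hval]
    apply squeeze_zero_norm (a := fun q : E (m+1) × ℝ => Real.sqrt (m+2) * Real.sqrt (Qs q.1))
    · intro q
      rw [norm_eq_sqrt_Qs]
      have hb : Qs (Fm q.1 q.2) ≤ (m+2) * Qs q.1 := by
        have : ∀ i : Fin (m+2), (Fm q.1 q.2) i ^ 2 ≤ Qs q.1 := by
          intro i
          have := abs_Fm_le q.1 q.2 i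
          nlinarith [abs_nonneg (Fm q.1 q.2 i), sq_abs (Fm q.1 q.2 i),
            Real.sq_sqrt (Qs_nonneg q.1), Real.sqrt_nonneg (Qs q.1)]
        calc Qs (Fm q.1 q.2) = ∑ i : Fin (m+2), (Fm q.1 q.2) i ^ 2 := rfl
          _ ≤ ∑ _i : Fin (m+2), Qs q.1 := Finset.sum_le_sum fun i _ => this i
          _ = (m+2) * Qs q.1 := by simp [Finset.sum_const, nsmul_eq_mul]
      calc Real.sqrt (Qs (Fm q.1 q.2)) ≤ Real.sqrt ((m+2) * Qs q.1) := Real.sqrt_le_sqrt hb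
        _ = Real.sqrt (m+2) * Real.sqrt (Qs q.1) := Real.sqrt_mul (by positivity) _
    · have hc : Continuous fun q : E (m+1) × ℝ => Real.sqrt (m+2) * Real.sqrt (Qs q.1) :=
        (continuous_const.mul (Real.continuous_sqrt.comp (continuous_Qs.comp continuous_fst)))
      have := hc.tendsto p
      have hQ0 : Qs p.1 = 0 := (Qs_eq_zero_iff p.1).2 hx
      rw [hQ0] at this
      simpa using this
  · refine (PiLp.continuous_toLp 2 (fun _ : Fin (m+2) => ℝ)).continuousAt.comp
      (f := fun q : E (m+1) × ℝ => (WithLp.ofLp (Fm q.1 q.2) : Fin (m+2) → ℝ)) (x := p) ?_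
    apply continuousAt_pi.2
    intro i
    have hDc : Continuous fun q : E (m+1) × ℝ => DD q.1 q.2 := by
      have : Continuous fun q : E (m+1) × ℝ => uu q.2 ^ 2 + bb q.2 ^ 2 * Qs q.1 := by
        apply Continuous.add
        · apply Continuous.pow
          exact (continuous_snd.mul (continuous_const.sub continuous_snd))
        · exact ((((continuous_const.mul continuous_snd).sub continuous_const).pow 2).mul
            (continuous_Qs.comp continuous_fst))
      exact this
    induction i using Fin.lastCases with
    | last =>
      have : (fun q : E (m+1) × ℝ => Fm q.1 q.2 (Fin.last (m+1)))
          = fun q => bb q.2 * uu q.2 * Qs q.1 / DD q.1 q.2 := by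
        funext q; exact Fm_last q.1 q.2
      rw [this]
      apply ContinuousAt.div
      · apply Continuous.continuousAt
        exact (((continuous_const.mul continuous_snd).sub continuous_const).mul
          (continuous_snd.mul (continuous_const.sub continuous_snd))).mul
          (continuous_Qs.comp continuous_fst)
      · exact hDc.continuousAt
      · exact hD
    | cast i =>
      have : (fun q : E (m+1) × ℝ => Fm q.1 q.2 (Fin.castSucc i))
          = fun q => q.1 i * (uu q.2 ^ 2 / DD q.1 q.2) := by
        funext q; exact Fm_castSucc q.1 q.2 i
      rw [this]
      apply ContinuousAt.mul
      · exact ((PiLp.continuous_apply 2 _ i).comp continuous_fst).continuousAt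
      · apply ContinuousAt.div
        · apply Continuous.continuousAt
          exact (continuous_snd.mul (continuous_const.sub continuous_snd)).pow 2
        · exact hDc.continuousAt
        · exact hD

lemma Fm_zero_cases {m : ℕ} {x : E (m+1)} {t : ℝ} (h : Fm x t = 0) :
    uu t = 0 ∨ x = 0 := by
  by_cases hD : DD x t = 0
  · exact Or.inr ((DD_eq_zero_iff x t).1 hD).2
  · have h0 : Qs (Fm x t) = 0 := by rw [h]; exact (Qs_eq_zero_iff 0).2 rfl
    rw [Qs_Fm] at h0
    rcases mul_eq_zero.1 ((div_eq_zero_iff.1 h0).resolve_right hD) with h1 | h1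
    · exact Or.inr ((Qs_eq_zero_iff x).1 h1)
    · exact Or.inl (pow_eq_zero_iff two_ne_zero |>.1 h1)

lemma uu_pos {t : ℝ} (h0 : 0 < t) (h1 : t < 1) : 0 < uu t := by
  unfold uu; nlinarith

lemma uu_ne_zero_cases {t : ℝ} (h : uu t = 0) : t = 0 ∨ t = 1 := by
  rcases mul_eq_zero.1 h with h | h
  · exact Or.inl h
  · exact Or.inr (by linarith)

lemma tt_inj {t t' : ℝ} (h0 : 0 < t) (h1 : t < 1) (h0' : 0 < t') (h1' : t' < 1)
    (h : bb t * uu t' = bb t' * uu t) : t = t' := by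
  simp only [bb, uu] at h
  have key : (t - t') * (t * t' + (1 - t) * (1 - t')) = 0 := by linear_combination h
  have hpos : 0 < t * t' + (1 - t) * (1 - t') := by nlinarith
  rcases mul_eq_zero.1 key with h2 | h2
  · linarith
  · linarith

lemma surj_aux {m : ℕ} {y : E (m+2)} (hy : y ∈ Hawaiian (m+1)) (hy0 : y ≠ 0) :
    ∃ x : E (m+1), x ∈ Hawaiian m ∧ ∃ t : ℝ, 0 < t ∧ t < 1 ∧ Fm x t = y := by
  obtain ⟨k, hk1, hk⟩ := mem_hawaiian_iff.1 hy
  have hkR : (1 : ℝ) ≤ (k : ℝ) := by exact_mod_cast hk1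
  have hQy : 0 < Qs y :=
    lt_of_le_of_ne (Qs_nonneg y) fun h => hy0 ((Qs_eq_zero_iff y).1 h.symm)
  have hy0pos : 0 < y 0 := by nlinarith
  set L : ℝ := y (Fin.last (m+1)) with hL
  set P : ℝ := ∑ i : Fin (m+1), y (Fin.castSucc i) ^ 2 with hPdef
  have hQsplit : Qs y = P + L ^ 2 := by rw [Qs, Fin.sum_univ_castSucc]
  have hy00 : y (Fin.castSucc (0 : Fin (m+1))) = y 0 := by rw [Fin.castSucc_zero]
  have hPpos : 0 < P := by
    have h1 : y (Fin.castSucc (0 : Fin (m+1))) ^ 2 ≤ P :=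
      Finset.single_le_sum (fun j _ => sq_nonneg (y (Fin.castSucc j))) (Finset.mem_univ _)
    rw [hy00] at h1
    nlinarith
  set s : ℝ := L / Qs y with hs
  have hsQ : s * Qs y = L := by rw [hs]; field_simp
  set r : ℝ := Real.sqrt (s ^ 2 + 4) with hr
  have hr2 : r ^ 2 = s ^ 2 + 4 := Real.sq_sqrt (by positivity)
  have hrpos : 0 < r := Real.sqrt_pos.2 (by positivity)
  clear_value s r
  set md : ℝ := 2 - s + r with hmd
  have hmdpos : 0 < md := by nlinarith
  set t : ℝ := 2 / md with ht
  have ht0 : 0 < t := by positivity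
  have ht1 : t < 1 := by rw [ht, div_lt_one hmdpos]; nlinarith
  have hquad : s * t ^ 2 + (2 - s) * t - 1 = 0 := by
    have key : s * 4 + (2 - s) * 2 * md - md ^ 2 = 0 := by
      rw [hmd]; linear_combination (-1 : ℝ) * hr2
    have hu : t * md = 2 := by rw [ht]; exact div_mul_cancel₀ _ hmdpos.ne'
    have hm : md ^ 2 * (s * t ^ 2 + (2 - s) * t - 1) = 0 := by
      linear_combination key + (s * (t * md + 2) + (2 - s) * md) * hu
    rcases mul_eq_zero.1 hm with h | h
    · exact absurd h (by positivity)
    · exact h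
  have hbu : bb t = s * uu t := by simp only [bb, uu]; linear_combination hquad
  have hupos : 0 < uu t := uu_pos ht0 ht1
  set x : E (m+1) := WithLp.toLp 2 (fun i => y (Fin.castSucc i) * (Qs y / P) : Fin (m+1) → ℝ) with hx
  have hxi : ∀ i, x i = y (Fin.castSucc i) * (Qs y / P) := fun i => rfl
  have hQsx : Qs x = Qs y ^ 2 / P := by
    rw [Qs]
    have : ∀ i : Fin (m+1), x i ^ 2 = y (Fin.castSucc i) ^ 2 * (Qs y / P) ^ 2 := by
      intro i; rw [hxi i]; ring
    rw [Finset.sum_congr rfl fun i _ => this i, ← Finset.sum_mul, ← hPdef]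
    field_simp
  have hxmem : x ∈ Hawaiian m := by
    rw [mem_hawaiian_iff]
    refine ⟨k, hk1, ?_⟩
    rw [hQsx, hxi 0, hy00]
    field_simp
    linear_combination hk
  have hDx : DD x t = uu t ^ 2 * (Qs y / P) := by
    rw [DD, hQsx, hbu]
    have h2 : s ^ 2 * Qs y ^ 2 = L ^ 2 := by linear_combination (s * Qs y + L) * hsQ
    field_simp
    linear_combination h2 - hQsplit
  refine ⟨x, hxmem, t, ht0, ht1, ?_⟩
  ext i
  induction i using Fin.lastCases with
  | last =>
    rw [Fm_last, hDx, hQsx, hbu, ← hL]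
    rw [← hsQ]
    field_simp
  | cast i =>
    rw [Fm_castSucc, hDx, hxi i]
    field_simp

lemma isClosed_hawaiian (m : ℕ) : IsClosed (Hawaiian m) := by
  rw [← isOpen_compl_iff, isOpen_iff_mem_nhds]
  intro x hx
  have hQx : Qs x ≠ 0 := by
    intro h
    refine hx (mem_hawaiian_iff.2 ⟨1, le_refl 1, ?_⟩)
    have hx0 : x = 0 := (Qs_eq_zero_iff x).1 h
    rw [h, hx0]
    show (1 : ℕ) * (0:ℝ) = 2 * (0 : ℝ)
    ring
  set S : Set ℝ := Set.range ((↑) : ℕ → ℝ) ∩ Set.Ici (1 : ℝ) with hS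
  have hSclosed : IsClosed S :=
    IsClosed.inter Nat.isClosedEmbedding_coe_real.isClosed_range isClosed_Ici
  set g : E (m+1) → ℝ := fun y => 2 * y 0 / Qs y with hg
  set U : Set (E (m+1)) := {y | Qs y ≠ 0} ∩ g ⁻¹' Sᶜ with hU
  have hUopen : IsOpen U := by
    apply ContinuousOn.isOpen_inter_preimage
    · apply ContinuousOn.div
      · exact (continuous_const.mul (PiLp.continuous_apply 2 _ 0)).continuousOn
      · exact continuous_Qs.continuousOn
      · exact fun y hy => hy
    · exact isOpen_compl_iff.2 (isClosed_eq continuous_Qs continuous_const)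
    · exact hSclosed.isOpen_compl
  have hxU : x ∈ U := by
    refine ⟨hQx, ?_⟩
    intro hgx
    obtain ⟨⟨k, hk⟩, hk1⟩ := hgx
    apply hx
    refine mem_hawaiian_iff.2 ⟨k, ?_, ?_⟩
    · have : (1 : ℝ) ≤ (k : ℝ) := by rw [hk]; exact hk1
      exact_mod_cast this
    · have : 2 * x 0 / Qs x = (k : ℝ) := hk.symm ▸ rfl
      field_simp at this
      linarith [this]
  refine Filter.mem_of_superset (hUopen.mem_nhds hxU) ?_
  rintro y ⟨hy1, hy2⟩ hyH
  obtain ⟨k, hk1, hk⟩ := mem_hawaiian_iff.1 hyH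
  apply hy2
  have hQy : Qs y ≠ 0 := hy1
  have hgy : g y = (k : ℝ) := by
    simp only [hg]
    rw [div_eq_iff hQy]
    linarith [hk]
  exact ⟨⟨k, hgy.symm⟩, by rw [Set.mem_Ici, hgy]; exact_mod_cast hk1⟩

lemma isCompact_hawaiian (m : ℕ) : IsCompact (Hawaiian m) := by
  apply Metric.isCompact_of_isClosed_isBounded (isClosed_hawaiian m)
  apply Bornology.IsBounded.subset (Metric.isBounded_closedBall (x := (0 : E (m+1))) (r := 2))
  intro x hxH
  obtain ⟨k, hk1, hk⟩ := mem_hawaiian_iff.1 hxH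
  have hkR : (1:ℝ) ≤ (k:ℝ) := by exact_mod_cast hk1
  rw [Metric.mem_closedBall, dist_zero_right, norm_eq_sqrt_Qs]
  have hQ := Qs_nonneg x
  have h0 : |x 0| ≤ Real.sqrt (Qs x) := abs_coord_le_sqrt x 0
  have hsq : Real.sqrt (Qs x) ^ 2 = Qs x := Real.sq_sqrt hQ
  have hs := Real.sqrt_nonneg (Qs x)
  nlinarith [abs_nonneg (x 0), le_abs_self (x 0)]

end
end HAux

open HAux

/-- For every `n ≥ 1` the reduced suspension of the `n`-dimensional Hawaiian earring is
homeomorphic to the `(n+1)`-dimensional Hawaiian earring, by a basepoint-preserving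
homeomorphism. -/
theorem reducedSuspension_hawaiian_homeomorph (n : ℕ) (hn : 1 ≤ n) :
    ∃ e : ReducedSuspension (Hawaiian n) (hawaiianBase n) ≃ₜ Hawaiian (n + 1),
      e (reducedSuspensionBase (Hawaiian n) (hawaiianBase n)) = hawaiianBase (n + 1) := by
  classical
  haveI hcs : CompactSpace (Hawaiian n) := isCompact_iff_compactSpace.1 (isCompact_hawaiian n)
  let g : Hawaiian n × I → Hawaiian (n+1) :=
    fun p => ⟨Fm (p.1 : E (n+1)) (p.2 : ℝ), Fm_mem p.1.2 _⟩
  -- points of the collapse set are sent to 0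
  have hzero : ∀ p : Hawaiian n × I, p ∈ suspCollapseSet (hawaiianBase n) →
      ((g p : E (n+2)) = 0) := by
    rintro ⟨x, t⟩ (h | h | h)
    · have h2 : t = (0 : I) := h
      have ht : (t : ℝ) = 0 := by rw [h2]; rfl
      exact Fm_eq_zero_of_uu _ (by rw [uu, ht]; ring)
    · have h2 : t = (1 : I) := h
      have ht : (t : ℝ) = 1 := by rw [h2]; rfl
      exact Fm_eq_zero_of_uu _ (by rw [uu, ht]; ring)
    · have h2 : x = hawaiianBase n := h
      have hx : (x : E (n+1)) = 0 := by rw [h2]; rfl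
      show Fm (x : E (n+1)) (t : ℝ) = 0
      rw [hx]
      exact Fm_eq_zero_of_x _
  have hresp : ∀ p q : Hawaiian n × I,
      (collapseSetoid (suspCollapseSet (hawaiianBase n))).r p q → g p = g q := by
    rintro p q (rfl | ⟨hp, hq⟩)
    · rfl
    · exact Subtype.ext ((hzero p hp).trans (hzero q hq).symm)
  let gl : ReducedSuspension (Hawaiian n) (hawaiianBase n) → Hawaiian (n+1) :=
    Quotient.lift g hresp
  -- if Fm = 0 on a point, the point is in the collapse set
  have hcollapse : ∀ p : Hawaiian n × I, (g p : E (n+2)) = 0 →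
      p ∈ suspCollapseSet (hawaiianBase n) := by
    rintro ⟨x, t⟩ h
    rcases Fm_zero_cases h with h1 | h1
    · rcases uu_ne_zero_cases h1 with h2 | h2
      · exact Or.inl (Subtype.ext h2)
      · exact Or.inr (Or.inl (Subtype.ext h2))
    · exact Or.inr (Or.inr (Subtype.ext h1))
  have hcont : Continuous gl := by
    apply Continuous.quotient_lift
    apply Continuous.subtype_mk
    have hc : Continuous fun p : Hawaiian n × I => ((p.1 : E (n+1)), (p.2 : ℝ)) :=
      (continuous_subtype_val.comp continuous_fst).prodMk
        (continuous_subtype_val.comp continuous_snd)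
    exact continuous_Fm.comp hc
  have hbij : Function.Bijective gl := by
    constructor
    · -- injective
      refine Quotient.ind₂ ?_
      rintro ⟨x, t⟩ ⟨x', t'⟩ h
      have hF : Fm (x : E (n+1)) (t : ℝ) = Fm (x' : E (n+1)) (t' : ℝ) :=
        congrArg Subtype.val h
      apply Quotient.sound
      by_cases hz : Fm (x : E (n+1)) (t : ℝ) = 0
      · exact Or.inr ⟨hcollapse (x, t) hz, hcollapse (x', t') (hF.symm.trans hz)⟩
      · -- neither is zero
        have hz' : Fm (x' : E (n+1)) (t' : ℝ) ≠ 0 := fun hc => hz (hF.trans hc)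
        have hux : uu (t : ℝ) ≠ 0 ∧ (x : E (n+1)) ≠ 0 := by
          constructor
          · exact fun hc => hz (Fm_eq_zero_of_uu _ hc)
          · intro hc
            apply hz
            show Fm (x : E (n+1)) (t : ℝ) = 0
            rw [hc]; exact Fm_eq_zero_of_x _
        have hux' : uu (t' : ℝ) ≠ 0 ∧ (x' : E (n+1)) ≠ 0 := by
          constructor
          · exact fun hc => hz' (Fm_eq_zero_of_uu _ hc)
          · intro hc
            apply hz'
            show Fm (x' : E (n+1)) (t' : ℝ) = 0
            rw [hc]; exact Fm_eq_zero_of_x _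
        have hQx : Qs (x : E (n+1)) ≠ 0 := fun hc => hux.2 ((Qs_eq_zero_iff _).1 hc)
        have hQx' : Qs (x' : E (n+1)) ≠ 0 := fun hc => hux'.2 ((Qs_eq_zero_iff _).1 hc)
        have hD : DD (x : E (n+1)) (t : ℝ) ≠ 0 := fun hc =>
          hux.2 ((DD_eq_zero_iff _ _).1 hc).2
        have hD' : DD (x' : E (n+1)) (t' : ℝ) ≠ 0 := fun hc =>
          hux'.2 ((DD_eq_zero_iff _ _).1 hc).2
        set c : ℝ := uu (t : ℝ) ^ 2 / DD (x : E (n+1)) (t : ℝ) with hcdef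
        set c' : ℝ := uu (t' : ℝ) ^ 2 / DD (x' : E (n+1)) (t' : ℝ) with hcdef'
        have hcpos : c ≠ 0 := div_ne_zero (pow_ne_zero 2 hux.1) hD
        have hcpos' : c' ≠ 0 := div_ne_zero (pow_ne_zero 2 hux'.1) hD'
        have hcoord : ∀ i : Fin (n+1), (x : E (n+1)) i * c = (x' : E (n+1)) i * c' := by
          intro i
          have : (Fm (x : E (n+1)) (t : ℝ)) (Fin.castSucc i) = (Fm (x' : E (n+1)) (t' : ℝ)) (Fin.castSucc i) := by
            rw [hF]
          rwa [Fm_castSucc, Fm_castSucc] at this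
        have hQF : Qs (x : E (n+1)) * c = Qs (x' : E (n+1)) * c' := by
          have := congrArg Qs hF
          rw [Qs_Fm, Qs_Fm] at this
          rw [hcdef, hcdef']
          calc Qs (x : E (n+1)) * (uu (t:ℝ) ^ 2 / DD (x : E (n+1)) (t:ℝ))
              = Qs (x : E (n+1)) * uu (t:ℝ) ^ 2 / DD (x : E (n+1)) (t:ℝ) := by ring
            _ = Qs (x' : E (n+1)) * uu (t':ℝ) ^ 2 / DD (x' : E (n+1)) (t':ℝ) := this
            _ = Qs (x' : E (n+1)) * (uu (t':ℝ) ^ 2 / DD (x' : E (n+1)) (t':ℝ)) := by ring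
        have hQc2 : Qs (x : E (n+1)) * c ^ 2 = Qs (x' : E (n+1)) * c' ^ 2 := by
          have h1 : ∀ i : Fin (n+1), ((x : E (n+1)) i * c) ^ 2 = ((x' : E (n+1)) i * c') ^ 2 :=
            fun i => by rw [hcoord i]
          have h2 : (∑ i, ((x : E (n+1)) i * c) ^ 2) = ∑ i, ((x' : E (n+1)) i * c') ^ 2 :=
            Finset.sum_congr rfl fun i _ => h1 i
          have e1 : (∑ i, ((x : E (n+1)) i * c) ^ 2) = Qs (x : E (n+1)) * c ^ 2 := by
            rw [Qs, Finset.sum_mul]; exact Finset.sum_congr rfl fun i _ => by ring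
          have e2 : (∑ i, ((x' : E (n+1)) i * c') ^ 2) = Qs (x' : E (n+1)) * c' ^ 2 := by
            rw [Qs, Finset.sum_mul]; exact Finset.sum_congr rfl fun i _ => by ring
          rw [← e1, ← e2]; exact h2
        -- deduce c = c'
        have hQcne : Qs (x : E (n+1)) * c ≠ 0 := mul_ne_zero hQx hcpos
        have hcc : c = c' := by
          have h3 : (Qs (x : E (n+1)) * c) * c = (Qs (x' : E (n+1)) * c') * c' := by
            calc (Qs (x : E (n+1)) * c) * c = Qs (x : E (n+1)) * c ^ 2 := by ring
              _ = Qs (x' : E (n+1)) * c' ^ 2 := hQc2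
              _ = (Qs (x' : E (n+1)) * c') * c' := by ring
          rw [← hQF] at h3
          exact mul_left_cancel₀ hQcne h3
        have hQQ : Qs (x : E (n+1)) = Qs (x' : E (n+1)) := by
          rw [hcc] at hQF
          exact mul_right_cancel₀ hcpos' hQF
        have hxx : (x : E (n+1)) = (x' : E (n+1)) := by
          ext i
          have := hcoord i
          rw [hcc] at this
          exact mul_right_cancel₀ hcpos' this
        -- deduce t = t'
        have hlast : (Fm (x : E (n+1)) (t : ℝ)) (Fin.last (n+1)) = (Fm (x' : E (n+1)) (t' : ℝ)) (Fin.last (n+1)) := by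
          rw [hF]
        rw [Fm_last, Fm_last] at hlast
        have ht01 : 0 < (t : ℝ) ∧ (t : ℝ) < 1 := by
          rcases lt_or_eq_of_le t.2.1 with h1 | h1
          · rcases lt_or_eq_of_le t.2.2 with h2 | h2
            · exact ⟨h1, h2⟩
            · exact absurd (by rw [uu, h2]; ring) hux.1
          · exact absurd (by rw [uu, ← h1]; ring) hux.1
        have ht01' : 0 < (t' : ℝ) ∧ (t' : ℝ) < 1 := by
          rcases lt_or_eq_of_le t'.2.1 with h1 | h1
          · rcases lt_or_eq_of_le t'.2.2 with h2 | h2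
            · exact ⟨h1, h2⟩
            · exact absurd (by rw [uu, h2]; ring) hux'.1
          · exact absurd (by rw [uu, ← h1]; ring) hux'.1
        have htt : (t : ℝ) = (t' : ℝ) := by
          apply tt_inj ht01.1 ht01.2 ht01'.1 ht01'.2
          -- from hlast : bb t * uu t * Qs x / DD x t = bb t' * uu t' * Qs x' / DD x' t'
          -- rewrite as (bb t / uu t) * (Qs x * c) = (bb t' / uu t') * (Qs x' * c')
          have e1 : bb (t:ℝ) * uu (t:ℝ) * Qs (x : E (n+1)) / DD (x : E (n+1)) (t:ℝ)
              = (bb (t:ℝ) / uu (t:ℝ)) * (Qs (x : E (n+1)) * c) := by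
            rw [hcdef]; field_simp [hux.1, hD]
          have e2 : bb (t':ℝ) * uu (t':ℝ) * Qs (x' : E (n+1)) / DD (x' : E (n+1)) (t':ℝ)
              = (bb (t':ℝ) / uu (t':ℝ)) * (Qs (x' : E (n+1)) * c') := by
            rw [hcdef']; field_simp [hux'.1, hD']
          rw [e1, e2, ← hQF] at hlast
          have h4 : bb (t:ℝ) / uu (t:ℝ) = bb (t':ℝ) / uu (t':ℝ) :=
            mul_right_cancel₀ hQcne hlast
          rw [div_eq_div_iff hux.1 hux'.1] at h4
          linarith [h4]
        exact Or.inl (Prod.ext (Subtype.ext hxx) (Subtype.ext htt))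
    · -- surjective
      intro y
      by_cases hy0 : (y : E (n+2)) = 0
      · refine ⟨Quotient.mk _ (hawaiianBase n, 0), ?_⟩
        apply Subtype.ext
        show Fm ((hawaiianBase n : Hawaiian n) : E (n+1)) ((0 : I) : ℝ) = (y : E (n+2))
        rw [hy0]
        have : ((hawaiianBase n : Hawaiian n) : E (n+1)) = 0 := rfl
        rw [this]
        exact Fm_eq_zero_of_x _
      · obtain ⟨x, hxmem, t, ht0, ht1, hFt⟩ := surj_aux y.2 hy0
        refine ⟨Quotient.mk _ ((⟨x, hxmem⟩ : Hawaiian n), ⟨t, le_of_lt ht0, le_of_lt ht1⟩), ?_⟩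
        exact Subtype.ext hFt
  refine ⟨Continuous.homeoOfEquivCompactToT2 (f := Equiv.ofBijective gl hbij) hcont, ?_⟩
  show gl (Quotient.mk _ (hawaiianBase n, 0)) = hawaiianBase (n+1)
  apply Subtype.ext
  show Fm ((hawaiianBase n : Hawaiian n) : E (n+1)) ((0 : I) : ℝ) = ((hawaiianBase (n+1) : Hawaiian (n+1)) : E (n+2))
  have h1 : ((hawaiianBase n : Hawaiian n) : E (n+1)) = 0 := rfl
  have h2 : ((hawaiianBase (n+1) : Hawaiian (n+1)) : E (n+2)) = 0 := rfl
  rw [h1, h2]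
  exact Fm_eq_zero_of_x _
end

section
/- Let C'(ℋ¹) = (ℋ¹ × [0,1]) / (ℋ¹ × {1}) be the unreduced cone over the 1-dimensional Hawaiian earring. Then C'(ℋ¹) is contractible, yet there exists a point pt ∈ C'(ℋ¹) such that the Hawaiian group ℋ₁(C'(ℋ¹), pt) is nontrivial: there is a continuous map f : ℋ¹ → C'(ℋ¹) with f(θ) = pt that is not homotopic rel {θ} to the constant map at pt. -/
open scoped unitInterval

/-- The setoid on `Z × I` defining the unreduced cone: `Z × {1}` is collapsed to a point. -/
def unreducedConeSetoid (Z : Type) : Setoid (Z × I) where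
  r a b := a = b ∨ (a.2 = 1 ∧ b.2 = 1)
  iseqv := ⟨fun _ => Or.inl rfl, by aesop, by aesop⟩

/-- The unreduced cone `C'(Z) = (Z × I) / (Z × {1})`, with the quotient topology. -/
abbrev UnreducedCone (Z : Type) [TopologicalSpace Z] : Type :=
  Quotient (unreducedConeSetoid Z)

namespace CHproof

local notation "E2" => EuclideanSpace ℝ (Fin 2)

lemma mem_haw_iff (x : E2) :
    x ∈ Hawaiian 1 ↔ ∃ k : ℕ, 1 ≤ k ∧ (x 0 - 1 / k) ^ 2 + x 1 ^ 2 = (1 / k) ^ 2 := by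
  unfold Hawaiian
  simp [Fin.sum_univ_one]

lemma circle_eq_iff (x : E2) (k : ℕ) (hk : 1 ≤ k) :
    (x 0 - 1 / k) ^ 2 + x 1 ^ 2 = (1 / k) ^ 2 ↔
      (x 0 ^ 2 + x 1 ^ 2) * k = 2 * x 0 := by
  have hk0 : (k : ℝ) ≠ 0 := Nat.cast_ne_zero.mpr (by omega)
  constructor
  · intro h
    have h' : (x 0 * k - 1) ^ 2 + x 1 ^ 2 * k ^ 2 = 1 := by
      field_simp at h
      linarith [h]
    have key : ((x 0 ^ 2 + x 1 ^ 2) * k - 2 * x 0) * k = 0 := by linear_combination h'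
    rcases mul_eq_zero.mp key with h2 | h2
    · linarith [h2]
    · exact absurd h2 hk0
  · intro h
    field_simp
    linear_combination (k:ℝ) * h

lemma zero_mem_haw : (0 : E2) ∈ Hawaiian 1 := by
  rw [mem_haw_iff]
  exact ⟨1, le_refl 1, by norm_num⟩

lemma norm_sq_eq (x : E2) : ‖x‖ ^ 2 = x 0 ^ 2 + x 1 ^ 2 := by
  rw [EuclideanSpace.norm_eq]
  rw [Real.sq_sqrt (by positivity)]
  simp [Fin.sum_univ_two, sq_abs]

lemma coord_abs_le_norm (x : E2) (i : Fin 2) : |x i| ≤ ‖x‖ := by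
  have h1 : x i ^ 2 ≤ ‖x‖ ^ 2 := by
    rw [norm_sq_eq]
    fin_cases i <;>
      simp only [Fin.zero_eta, Fin.mk_one, Fin.isValue] <;>
      nlinarith [sq_nonneg (x 0), sq_nonneg (x 1)]
  calc |x i| = Real.sqrt (x i ^ 2) := (Real.sqrt_sq_eq_abs _).symm
    _ ≤ Real.sqrt (‖x‖ ^ 2) := Real.sqrt_le_sqrt h1
    _ = ‖x‖ := by rw [Real.sqrt_sq (norm_nonneg _)]

lemma circle_norm_le (x : E2) (k : ℕ) (hk : 1 ≤ k)
    (hx : (x 0 - 1 / k) ^ 2 + x 1 ^ 2 = (1 / k) ^ 2) : ‖x‖ ≤ 2 / k := by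
  have hk0 : (0:ℝ) < k := by exact_mod_cast Nat.pos_of_ne_zero (by omega)
  have h := (circle_eq_iff x k hk).mp hx
  have h2 : ‖x‖ ^ 2 * k ≤ 2 * ‖x‖ := by
    rw [norm_sq_eq]
    calc (x 0 ^ 2 + x 1 ^ 2) * k = 2 * x 0 := h
      _ ≤ 2 * |x 0| := by nlinarith [le_abs_self (x 0)]
      _ ≤ 2 * ‖x‖ := by nlinarith [coord_abs_le_norm x 0]
  rcases eq_or_lt_of_le (norm_nonneg x) with h0 | h0
  · rw [← h0]; positivity
  · rw [le_div_iff₀ hk0]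
    nlinarith [h2]

lemma haw_norm_le {x : E2} (hx : x ∈ Hawaiian 1) : ‖x‖ ≤ 2 := by
  rw [mem_haw_iff] at hx
  obtain ⟨k, hk, h⟩ := hx
  have := circle_norm_le x k hk h
  have hk1 : (1:ℝ) ≤ k := by exact_mod_cast hk
  calc ‖x‖ ≤ 2 / k := this
    _ ≤ 2 / 1 := by apply div_le_div_of_nonneg_left <;> linarith
    _ = 2 := by norm_num


/-- The "index" function. -/
noncomputable def idx (y : E2) : ℝ := 2 * y 0 / (y 0 ^ 2 + y 1 ^ 2)

lemma nsq_pos {y : E2} (hy : y ≠ 0) : 0 < y 0 ^ 2 + y 1 ^ 2 := by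
  rw [← norm_sq_eq]
  have : ‖y‖ ≠ 0 := norm_ne_zero_iff.mpr hy
  positivity

lemma continuousAt_idx {y : E2} (hy : y ≠ 0) : ContinuousAt idx y := by
  have h0 : ContinuousAt (fun z : E2 => z 0) y := ((continuous_apply (0 : Fin 2)).comp (PiLp.continuous_ofLp 2 _)).continuousAt
  have h1 : ContinuousAt (fun z : E2 => z 1) y := ((continuous_apply (1 : Fin 2)).comp (PiLp.continuous_ofLp 2 _)).continuousAt
  exact (h0.const_mul 2).div ((h0.pow 2).add (h1.pow 2)) (nsq_pos hy).ne'

lemma idx_eq_iff {y : E2} (hy : y ≠ 0) (k : ℕ) (hk : 1 ≤ k) :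
    ((y 0 - 1 / k) ^ 2 + y 1 ^ 2 = (1 / k) ^ 2) ↔ idx y = k := by
  rw [circle_eq_iff y k hk, idx, div_eq_iff (nsq_pos hy).ne']
  constructor <;> intro h <;> linarith

/-- The set of "integer values at least one". -/
def Cnat : Set ℝ := {r | ∃ k : ℕ, 1 ≤ k ∧ r = k}

lemma isClosed_Cnat : IsClosed Cnat := by
  have : Cnat = (↑) '' {k : ℕ | 1 ≤ k} := by
    ext r; constructor
    · rintro ⟨k, hk, rfl⟩; exact ⟨k, hk, rfl⟩
    · rintro ⟨k, hk, rfl⟩; exact ⟨k, hk, rfl⟩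
  rw [this]
  exact (Nat.isClosedEmbedding_coe_real.isClosedMap _ (isClosed_discrete _))

lemma haw_char : Hawaiian 1 = {0} ∪ {y : E2 | y ≠ 0 ∧ idx y ∈ Cnat} := by
  ext y
  rw [mem_haw_iff]
  constructor
  · rintro ⟨k, hk, h⟩
    by_cases hy : y = 0
    · exact Or.inl hy
    · exact Or.inr ⟨hy, k, hk, (idx_eq_iff hy k hk).mp h⟩
  · rintro (rfl | ⟨hy, k, hk, h⟩)
    · exact ⟨1, le_refl 1, by norm_num⟩
    · exact ⟨k, hk, (idx_eq_iff hy k hk).mpr h⟩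

lemma isClosed_haw : IsClosed (Hawaiian 1) := by
  rw [← closure_subset_iff_isClosed]
  intro y hy
  by_cases h0 : y = 0
  · rw [h0]; exact zero_mem_haw
  · rw [haw_char] at hy ⊢
    right
    refine ⟨h0, ?_⟩
    set S := {z : E2 | z ≠ 0 ∧ idx z ∈ Cnat} with hS
    have hyS : y ∈ closure S := by
      have : closure ({(0:E2)} ∪ S) ⊆ closure {(0:E2)} ∪ closure S := by
        rw [closure_union]
      rcases this hy with h | h
      · exact absurd (by simpa using h) h0
      · exact h
    have hne : (Filter.NeBot (nhdsWithin y S)) := mem_closure_iff_nhdsWithin_neBot.mp hyS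
    have htend : Filter.Tendsto idx (nhdsWithin y S) (nhds (idx y)) :=
      (continuousAt_idx h0).continuousWithinAt
    exact isClosed_Cnat.mem_of_tendsto htend
      (Filter.eventually_of_mem self_mem_nhdsWithin (fun z hz => hz.2))

lemma isCompact_haw : IsCompact (Hawaiian 1) := by
  apply Metric.isCompact_of_isClosed_isBounded isClosed_haw
  apply Bornology.IsBounded.subset (Metric.isBounded_closedBall (x := (0:E2)) (r := 2))
  intro y hy
  simpa [Metric.mem_closedBall, dist_eq_norm] using haw_norm_le hy


/-- The geometric cone over the Hawaiian earring, in `E2 × ℝ`. -/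
def Cgeo : Set (EuclideanSpace ℝ (Fin 2) × ℝ) :=
  {p | ∃ x ∈ Hawaiian 1, ∃ t ∈ Set.Icc (0:ℝ) 1, p = ((1 - t) • x, t)}

/-- The underlying map from `ℋ × I` to the geometric cone. -/
noncomputable def phi (a : Hawaiian 1 × I) : EuclideanSpace ℝ (Fin 2) × ℝ :=
  ((1 - (a.2 : ℝ)) • (a.1 : E2), (a.2 : ℝ))

lemma phi_mem (a : Hawaiian 1 × I) : phi a ∈ Cgeo :=
  ⟨a.1, a.1.2, a.2, a.2.2, rfl⟩

lemma continuous_phi : Continuous phi := by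
  unfold phi
  fun_prop

lemma phi_resp (a b : Hawaiian 1 × I) (h : (unreducedConeSetoid (Hawaiian 1)).r a b) :
    phi a = phi b := by
  rcases h with rfl | ⟨h1, h2⟩
  · rfl
  · unfold phi
    rw [h1, h2]
    norm_num

/-- The induced map on the cone quotient. -/
noncomputable def PhiFun : UnreducedCone (Hawaiian 1) → Cgeo :=
  Quotient.lift (fun a => (⟨phi a, phi_mem a⟩ : Cgeo)) (fun a b h => by
    simpa [Subtype.ext_iff] using phi_resp a b h)

lemma continuous_PhiFun : Continuous PhiFun :=
  Continuous.quotient_lift (continuous_phi.subtype_mk _) _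

lemma PhiFun_bijective : Function.Bijective PhiFun := by
  constructor
  · intro a b
    refine Quotient.inductionOn₂ a b (fun p q h => ?_)
    apply Quotient.sound
    have h' : phi p = phi q := by simpa [PhiFun, Subtype.ext_iff] using h
    unfold phi at h'
    have ht : (p.2 : ℝ) = (q.2 : ℝ) := congrArg Prod.snd h'
    have ht2 : p.2 = q.2 := Subtype.ext ht
    by_cases h1 : (p.2 : ℝ) = 1
    · exact Or.inr ⟨Subtype.ext h1, Subtype.ext (ht ▸ h1)⟩
    · left
      have hx : (1 - (p.2 : ℝ)) • (p.1 : E2) = (1 - (p.2 : ℝ)) • (q.1 : E2) := by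
        have := congrArg Prod.fst h'
        simpa [ht] using this
      have hne : (1 - (p.2 : ℝ)) ≠ 0 := sub_ne_zero.mpr (Ne.symm h1)
      have := smul_right_injective E2 hne hx
      exact Prod.ext (Subtype.ext this) ht2
  · rintro ⟨p, x, hx, t, ht, rfl⟩
    exact ⟨Quotient.mk _ (⟨x, hx⟩, ⟨t, ht⟩), rfl⟩

instance : CompactSpace (Hawaiian 1) := isCompact_iff_compactSpace.mp isCompact_haw

noncomputable def Phi : UnreducedCone (Hawaiian 1) ≃ₜ Cgeo :=
  Continuous.homeoOfEquivCompactToT2 (f := Equiv.ofBijective PhiFun PhiFun_bijective)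
    continuous_PhiFun

lemma Phi_mk (a : Hawaiian 1 × I) :
    (Phi (Quotient.mk _ a) : E2 × ℝ) = ((1 - (a.2 : ℝ)) • (a.1 : E2), (a.2 : ℝ)) := rfl

/-- apex of the cone -/
lemma apex_mem : ((0 : E2), (1:ℝ)) ∈ Cgeo :=
  ⟨0, (hawaiianBase 1).2, 1, by norm_num, by norm_num⟩

lemma starConvex_Cgeo : StarConvex ℝ ((0 : E2), (1:ℝ)) Cgeo := by
  rintro p ⟨x, hx, t, ht, rfl⟩ a b ha hb hab
  refine ⟨x, hx, a + b * t, ⟨by nlinarith [ht.1, ht.2], by nlinarith [ht.1, ht.2]⟩, ?_⟩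
  have h1 : 1 - (a + b * t) = b * (1 - t) := by nlinarith
  rw [Prod.ext_iff]
  constructor
  · show a • (0:E2) + b • ((1-t) • x) = (1 - (a + b*t)) • x
    rw [h1, smul_zero, zero_add, smul_smul]
  · show a * 1 + b * t = a + b * t
    ring

instance contractible_Cgeo : ContractibleSpace Cgeo :=
  starConvex_Cgeo.contractibleSpace ⟨_, apex_mem⟩

lemma contractible_cone : ContractibleSpace (UnreducedCone (Hawaiian 1)) :=
  (Phi.toHomotopyEquiv).contractibleSpace


/-- The k-th circle as a set in the plane. -/
def Ck (k : ℕ) : Set (EuclideanSpace ℝ (Fin 2)) :=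
  {x | (x 0 - 1 / k) ^ 2 + x 1 ^ 2 = (1 / k) ^ 2}

lemma Ck_subset_haw {k : ℕ} (hk : 1 ≤ k) : Ck k ⊆ Hawaiian 1 := fun x hx =>
  (mem_haw_iff x).mpr ⟨k, hk, hx⟩

lemma zero_mem_Ck (k : ℕ) : (0 : E2) ∈ Ck k := by
  simp [Ck]

lemma nat_cast_gap {m n : ℕ} (h : m ≠ n) : (1:ℝ) ≤ |(m:ℝ) - n| := by
  have : ((m:ℤ) - n) ≠ 0 := by
    simpa [sub_eq_zero] using fun hh => h (by exact_mod_cast hh)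
  have h1 : (1:ℤ) ≤ |(m:ℤ) - n| := Int.one_le_abs this
  have : (1:ℝ) ≤ |((m:ℤ) - n : ℤ)| := by exact_mod_cast h1
  simpa [Int.cast_abs] using this

lemma mem_Ck_iff_idx {y : E2} (hy : y ≠ 0) {k : ℕ} (hk : 1 ≤ k) :
    y ∈ Ck k ↔ idx y = k := idx_eq_iff hy k hk

/-- Retraction of the earring onto the k-th circle, on the level of the plane. -/
noncomputable def rho' (k : ℕ) (y : Hawaiian 1) : E2 :=
  haveI := Classical.dec ((y : E2) ∈ Ck k)
  if (y : E2) ∈ Ck k then (y : E2) else 0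

lemma rho'_mem (k : ℕ) (y : Hawaiian 1) : rho' k y ∈ Ck k := by
  unfold rho'
  split
  · assumption
  · exact zero_mem_Ck k

lemma norm_rho'_le (k : ℕ) (y : Hawaiian 1) : ‖rho' k y‖ ≤ ‖(y:E2)‖ := by
  unfold rho'
  split
  · exact le_refl _
  · simp

lemma continuous_rho' {k : ℕ} (hk : 1 ≤ k) : Continuous (rho' k) := by
  rw [continuous_iff_continuousAt]
  intro y
  by_cases h0 : (y : E2) = 0
  · -- continuity at the basepoint, via the norm estimate
    rw [Metric.continuousAt_iff]
    intro ε hε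
    refine ⟨ε, hε, fun {z} hz => ?_⟩
    have h1 : rho' k y = 0 := by
      unfold rho'; split <;> simp [h0]
    rw [h1, dist_zero_right]
    calc ‖rho' k z‖ ≤ ‖(z:E2)‖ := norm_rho'_le k z
      _ = dist (z:E2) (y:E2) := by rw [h0, dist_eq_norm, sub_zero]
      _ = dist z y := (Subtype.dist_eq z y).symm
      _ < ε := hz
  · -- local constancy of membership in Ck
    have hval : ContinuousAt (Subtype.val : Hawaiian 1 → E2) y := continuousAt_subtype_val
    have hne : ∀ᶠ z : Hawaiian 1 in nhds y, (z : E2) ≠ 0 := by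
      have : IsOpen {w : E2 | w ≠ 0} := isOpen_ne
      exact hval.preimage_mem_nhds (this.mem_nhds h0)
    have hidx : ∀ᶠ z : Hawaiian 1 in nhds y, |idx (z:E2) - idx (y:E2)| < 1 := by
      have h2 : ContinuousAt (fun z : Hawaiian 1 => idx (z : E2)) y :=
        (continuousAt_idx h0).comp hval
      have : ∀ᶠ r in nhds (idx (y:E2)), |r - idx (y:E2)| < 1 := by
        have := Metric.ball_mem_nhds (idx (y:E2)) one_pos
        exact Filter.mem_of_superset this (fun r hr => by simpa [Metric.mem_ball, Real.dist_eq] using hr)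
      exact h2.eventually this
    have hnat : ∀ z : Hawaiian 1, (z:E2) ≠ 0 → ∃ m : ℕ, 1 ≤ m ∧ idx (z:E2) = m := by
      intro z hz
      obtain ⟨m, hm, hmeq⟩ := (mem_haw_iff (z:E2)).mp z.2
      exact ⟨m, hm, (idx_eq_iff hz m hm).mp hmeq⟩
    have hiff : ∀ᶠ z : Hawaiian 1 in nhds y, ((z:E2) ∈ Ck k ↔ (y:E2) ∈ Ck k) := by
      filter_upwards [hne, hidx] with z hz1 hz2
      obtain ⟨m, hm, hmeq⟩ := hnat z hz1
      obtain ⟨m', hm', hmeq'⟩ := hnat y h0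
      have : idx (z:E2) = idx (y:E2) := by
        by_contra hcon
        have hmm : m ≠ m' := fun hh => hcon (by rw [hmeq, hmeq', hh])
        have := nat_cast_gap hmm
        rw [hmeq, hmeq'] at hz2
        linarith
      rw [mem_Ck_iff_idx hz1 hk, mem_Ck_iff_idx h0 hk, this]
    by_cases hmem : (y:E2) ∈ Ck k
    · have heq : rho' k =ᶠ[nhds y] (Subtype.val : Hawaiian 1 → E2) := by
        filter_upwards [hiff] with z hz
        unfold rho'
        rw [if_pos (hz.mpr hmem)]
      exact ContinuousAt.congr hval heq.symm
    · have heq : rho' k =ᶠ[nhds y] (fun _ => (0:E2)) := by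
        filter_upwards [hiff] with z hz
        unfold rho'
        rw [if_neg (fun hh => hmem (hz.mp hh))]
      exact ContinuousAt.congr continuousAt_const heq.symm


variable {k : ℕ} (hk : 1 ≤ k)

/-- Parametrization of the k-th circle. -/
noncomputable def eC (k : ℕ) (t : ℝ) : E2 :=
  ((1 + Real.cos t) / k) • EuclideanSpace.single (0 : Fin 2) (1:ℝ) +
    (Real.sin t / k) • EuclideanSpace.single (1 : Fin 2) (1:ℝ)

lemma eC_apply_zero (k : ℕ) (t : ℝ) : eC k t 0 = (1 + Real.cos t) / k := by
  simp [eC, EuclideanSpace.single_apply]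

lemma eC_apply_one (k : ℕ) (t : ℝ) : eC k t 1 = Real.sin t / k := by
  simp [eC, EuclideanSpace.single_apply]

include hk in
lemma eC_mem (t : ℝ) : eC k t ∈ Ck k := by
  have hk0 : (k : ℝ) ≠ 0 := Nat.cast_ne_zero.mpr (by omega)
  show (eC k t 0 - 1 / k) ^ 2 + eC k t 1 ^ 2 = (1 / k) ^ 2
  rw [eC_apply_zero, eC_apply_one]
  have h1 : (1 + Real.cos t) / ↑k - 1 / ↑k = Real.cos t / k := by field_simp; ring
  rw [h1, div_pow, div_pow, div_pow, ← add_div, Real.cos_sq_add_sin_sq]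
  norm_num

lemma continuous_eC (k : ℕ) : Continuous (eC k) := by
  unfold eC
  fun_prop

lemma eC_periodic (k : ℕ) : eC k (2 * Real.pi) = eC k 0 := by
  unfold eC
  rw [Real.cos_two_pi, Real.sin_two_pi, Real.cos_zero, Real.sin_zero]

/-- Embedding of the k-th circle into the complex unit circle. -/
noncomputable def cf (k : ℕ) (z : E2) : ℂ :=
  ((k * z 0 - 1 : ℝ) : ℂ) + ((k * z 1 : ℝ) : ℂ) * Complex.I

lemma continuous_cf (k : ℕ) : Continuous fun z : Ck k => cf k (z : E2) := by
  unfold cf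
  have h0 : Continuous fun z : Ck k => (z : E2) 0 := by
    exact (continuous_apply (0 : Fin 2)).comp ((PiLp.continuous_ofLp 2 _).comp continuous_subtype_val)
  have h1 : Continuous fun z : Ck k => (z : E2) 1 := by
    exact (continuous_apply (1 : Fin 2)).comp ((PiLp.continuous_ofLp 2 _).comp continuous_subtype_val)
  continuity

include hk in
lemma norm_cf {z : E2} (hz : z ∈ Ck k) : ‖cf k z‖ = 1 := by
  have hk0 : (k : ℝ) ≠ 0 := Nat.cast_ne_zero.mpr (by omega)
  have hz' : (z 0 - 1 / k) ^ 2 + z 1 ^ 2 = (1 / k) ^ 2 := hz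
  have hsq : Complex.normSq (cf k z) = 1 := by
    unfold cf
    rw [Complex.normSq_add_mul_I]
    field_simp at hz' ⊢
    nlinarith [hz']
  have := Complex.normSq_eq_norm_sq (cf k z)
  rw [hsq] at this
  have habs : ‖cf k z‖ ^ 2 = 1 := this.symm
  have h2 : ‖cf k z‖ = 1 := by
    nlinarith [norm_nonneg (cf k z)]
  rw [h2]

include hk in
lemma cf_ne_zero {z : E2} (hz : z ∈ Ck k) : cf k z ≠ 0 := by
  intro h
  have := norm_cf hk hz
  rw [h] at this
  simp at this

lemma cf_eC (k : ℕ) (hk : 1 ≤ k) (t : ℝ) : cf k (eC k t) = Complex.exp (t * Complex.I) := by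
  have hk0 : (k : ℝ) ≠ 0 := Nat.cast_ne_zero.mpr (by omega)
  rw [Complex.exp_mul_I]
  unfold cf
  rw [eC_apply_zero, eC_apply_one]
  rw [← Complex.ofReal_cos, ← Complex.ofReal_sin]
  have hk0C : (k:ℂ) ≠ 0 := Nat.cast_ne_zero.mpr (by omega)
  push_cast
  field_simp
  ring

lemma cf_zero_val (k : ℕ) : cf k 0 = -1 := by
  unfold cf
  norm_num


/-- telescoping product via exp/log -/
lemma exp_sum_log (f : ℕ → ℂ) (hf : ∀ j, f j ≠ 0) (m : ℕ) :
    Complex.exp (∑ j ∈ Finset.range m, Complex.log (f (j+1) / f j)) = f m / f 0 := by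
  induction m with
  | zero => simp [div_self (hf 0)]
  | succ m ih =>
    rw [Finset.sum_range_succ, Complex.exp_add, ih,
      Complex.exp_log (div_ne_zero (hf (m+1)) (hf m))]
    rw [div_mul_div_comm, mul_comm (f 0) (f m), mul_div_mul_left _ _ (hf m)]

lemma near_one_slit {z : ℂ} (h : ‖z - 1‖ < 1) : z ∈ Complex.slitPlane := by
  rw [Complex.mem_slitPlane_iff]
  left
  have h1 : |(z - 1).re| ≤ ‖z - 1‖ := Complex.abs_re_le_norm (z - 1)
  have h2 : (z - 1).re = z.re - 1 := by simp
  rw [h2] at h1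
  cases' abs_le.mp h1 with h3 h4
  linarith

lemma ratio_slit {a b : ℂ} (ha : ‖a‖ = 1) (hb : ‖b‖ = 1) (hd : dist a b < 1) :
    a / b ∈ Complex.slitPlane := by
  have hb0 : b ≠ 0 := by intro h; rw [h] at hb; simp at hb
  apply near_one_slit
  have : a / b - 1 = (a - b) / b := by field_simp
  rw [this, norm_div, hb, div_one]
  rw [dist_eq_norm] at hd
  exact hd

/-- clamp to [0,1] -/
noncomputable def cl (r : ℝ) : ℝ := max 0 (min r 1)

lemma continuous_cl : Continuous cl := by unfold cl; fun_prop

lemma cl_nonneg (r : ℝ) : 0 ≤ cl r := le_max_left _ _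

lemma cl_le_one (r : ℝ) : cl r ≤ 1 := max_le (by norm_num) (min_le_right _ _)

lemma cl_mem (r : ℝ) : cl r ∈ Set.Icc (0:ℝ) 1 := ⟨cl_nonneg r, cl_le_one r⟩

lemma cl_of_mem {r : ℝ} (h : r ∈ Set.Icc (0:ℝ) 1) : cl r = r := by
  unfold cl
  rw [min_eq_left h.2, max_eq_right h.1]

lemma cl_zero : cl 0 = 0 := cl_of_mem (by norm_num)
lemma cl_one : cl 1 = 1 := cl_of_mem (by norm_num)

/-- grid clamp -/
noncomputable def ugr (N : ℕ) (j : ℕ) (r : ℝ) : ℝ := min (cl r) (j / N)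

lemma continuous_ugr (N j : ℕ) : Continuous (ugr N j) :=
  continuous_cl.min continuous_const

lemma ugr_zero (N : ℕ) (r : ℝ) : ugr N 0 r = 0 := by
  unfold ugr
  simp [min_eq_right (cl_nonneg r)]

lemma ugr_top {N : ℕ} (hN : 1 ≤ N) (r : ℝ) : ugr N N r = cl r := by
  unfold ugr
  have : (N:ℝ)/N = 1 := div_self (Nat.cast_ne_zero.mpr (by omega))
  rw [this, min_eq_left (cl_le_one r)]

lemma ugr_mem {N : ℕ} (j : ℕ) (r : ℝ) : ugr N j r ∈ Set.Icc (0:ℝ) 1 := by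
  constructor
  · exact le_min (cl_nonneg r) (by positivity)
  · exact min_le_of_left_le (cl_le_one r)

lemma ugr_gap {N : ℕ} (hN : 1 ≤ N) (j : ℕ) (r : ℝ) :
    |ugr N (j+1) r - ugr N j r| ≤ 1 / N := by
  have hN0 : (0:ℝ) < N := by exact_mod_cast Nat.pos_of_ne_zero (by omega)
  have hcast : ((j+1:ℕ):ℝ) = (j:ℝ) + 1 := by push_cast; ring
  unfold ugr
  rw [hcast]
  set x := cl r with hx
  set a := (j:ℝ)/N with hadef
  set b := ((j:ℝ)+1)/N with hbdef
  have hab : a ≤ b := by rw [hadef, hbdef]; gcongr; linarith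
  have hba : b - a = 1 / N := by rw [hadef, hbdef]; field_simp; ring
  have key : |min x b - min x a| ≤ b - a := by
    rw [abs_le]
    constructor
    · have := min_le_min (le_refl x) hab
      linarith
    · rcases le_total x a with h | h
      · rw [min_eq_left h, min_eq_left (h.trans hab)]; linarith
      · rw [min_eq_right h]
        have : min x b ≤ b := min_le_right _ _
        linarith
  rw [← hba]
  exact key


lemma square_lift (g : ℝ × ℝ → ℂ) (hg : Continuous g) (hn : ∀ p, ‖g p‖ = 1) :
    ∃ h : ℝ × ℝ → ℂ, Continuous h ∧
      ∀ p : ℝ × ℝ, Complex.exp (h p) = g (cl p.1, cl p.2) := by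
  have hne : ∀ p, g p ≠ 0 := by
    intro p hp
    have := hn p
    rw [hp] at this
    simp at this
  -- uniform continuity on the unit square
  have hK : IsCompact ((Set.Icc (0:ℝ) 1) ×ˢ (Set.Icc (0:ℝ) 1)) :=
    isCompact_Icc.prod isCompact_Icc
  have huc := hK.uniformContinuousOn_of_continuous hg.continuousOn
  rw [Metric.uniformContinuousOn_iff] at huc
  obtain ⟨δ, hδ, hucd⟩ := huc 1 one_pos
  obtain ⟨n, hn'⟩ := exists_nat_one_div_lt hδ
  set N := n + 1 with hN
  have hN1 : 1 ≤ N := by omega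
  have hNd : (1:ℝ) / N < δ := by exact_mod_cast hn'
  -- closeness of g at grid-adjacent points
  have hclose : ∀ p q : ℝ × ℝ, p ∈ (Set.Icc (0:ℝ) 1) ×ˢ (Set.Icc (0:ℝ) 1) →
      q ∈ (Set.Icc (0:ℝ) 1) ×ˢ (Set.Icc (0:ℝ) 1) → dist p q ≤ 1 / N →
      g p / g q ∈ Complex.slitPlane := by
    intro p q hp hq hd
    exact ratio_slit (hn p) (hn q) (hucd p hp q hq (lt_of_le_of_lt hd hNd))
  have memK : ∀ (a b : ℝ), a ∈ Set.Icc (0:ℝ) 1 → b ∈ Set.Icc (0:ℝ) 1 →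
      (a, b) ∈ (Set.Icc (0:ℝ) 1) ×ˢ (Set.Icc (0:ℝ) 1) := fun a b ha hb => ⟨ha, hb⟩
  -- the two families of ratios
  have slit1 : ∀ (s : ℝ) (j : ℕ),
      g (ugr N (j+1) s, 0) / g (ugr N j s, 0) ∈ Complex.slitPlane := by
    intro s j
    apply hclose _ _ (memK _ _ (ugr_mem _ _) (by norm_num))
      (memK _ _ (ugr_mem _ _) (by norm_num))
    rw [Prod.dist_eq]
    simp only [dist_self]
    rw [Real.dist_eq]
    exact max_le (ugr_gap hN1 j s) (by positivity)
  have slit2 : ∀ (s t : ℝ) (j : ℕ),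
      g (cl s, ugr N (j+1) t) / g (cl s, ugr N j t) ∈ Complex.slitPlane := by
    intro s t j
    apply hclose _ _ (memK _ _ (cl_mem s) (ugr_mem _ _))
      (memK _ _ (cl_mem s) (ugr_mem _ _))
    rw [Prod.dist_eq]
    simp only [dist_self]
    rw [Real.dist_eq]
    exact max_le (by positivity) (ugr_gap hN1 j t)
  -- the lift
  refine ⟨fun p => Complex.log (g (0, 0)) +
      (∑ j ∈ Finset.range N, Complex.log (g (ugr N (j+1) p.1, 0) / g (ugr N j p.1, 0))) +
      (∑ j ∈ Finset.range N,
        Complex.log (g (cl p.1, ugr N (j+1) p.2) / g (cl p.1, ugr N j p.2))), ?_, ?_⟩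
  · apply Continuous.add
    apply Continuous.add continuous_const
    · apply continuous_finset_sum
      intro j _
      apply Continuous.clog
      · exact ((hg.comp (((continuous_ugr N (j+1)).comp continuous_fst).prodMk
          continuous_const)).div
          (hg.comp (((continuous_ugr N j).comp continuous_fst).prodMk continuous_const))
          (fun p => hne _))
      · exact fun p => slit1 p.1 j
    · apply continuous_finset_sum
      intro j _
      apply Continuous.clog
      · exact ((hg.comp ((continuous_cl.comp continuous_fst).prodMk
          ((continuous_ugr N (j+1)).comp continuous_snd))).div
          (hg.comp ((continuous_cl.comp continuous_fst).prodMk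
          ((continuous_ugr N j).comp continuous_snd)))
          (fun p => hne _))
      · exact fun p => slit2 p.1 p.2 j
  · intro p
    rw [Complex.exp_add, Complex.exp_add, Complex.exp_log (hne _)]
    rw [exp_sum_log (fun j => g (ugr N j p.1, 0)) (fun j => hne _) N]
    rw [exp_sum_log (fun j => g (cl p.1, ugr N j p.2)) (fun j => hne _) N]
    rw [ugr_top hN1, ugr_top hN1, ugr_zero, ugr_zero]
    field_simp
    exact mul_div_cancel_left₀ _ (mul_ne_zero (hne _) (hne _))


lemma const_of_exp_eq_one (v : ℝ → ℂ) (hv : Continuous v)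
    (h1 : ∀ t, Complex.exp (v t) = 1) (a : ℝ) : v a = v 0 := by
  have hval : ∀ t, ∃ m : ℤ, v t = m * (2 * Real.pi * Complex.I) := by
    intro t
    exact Complex.exp_eq_one_iff.mp (h1 t)
  have hgap : ∀ s t : ℝ, ‖v s - v t‖ < 1 → v s = v t := by
    intro s t hd
    obtain ⟨m, hm⟩ := hval s
    obtain ⟨m', hm'⟩ := hval t
    by_cases hmm : m = m'
    · rw [hm, hm', hmm]
    · exfalso
      have hdiff : v s - v t = ((m - m' : ℤ) : ℂ) * (2 * Real.pi * Complex.I) := by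
        rw [hm, hm']
        push_cast
        ring
      have hnorm : ‖v s - v t‖ = |((m - m' : ℤ) : ℝ)| * (2 * Real.pi) := by
        rw [hdiff]
        rw [norm_mul]
        congr 1
        · rw [Complex.norm_intCast]
        · rw [norm_mul, norm_mul, Complex.norm_I, Complex.norm_ofNat,
            Complex.norm_real, Real.norm_eq_abs,
            abs_of_pos Real.pi_pos, mul_one]
      have h2 : (1:ℝ) ≤ |((m - m' : ℤ) : ℝ)| := by
        have : (1:ℤ) ≤ |m - m'| := Int.one_le_abs (sub_ne_zero.mpr hmm)
        calc (1:ℝ) ≤ |(m - m' : ℤ)| := by exact_mod_cast this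
          _ = |((m - m' : ℤ) : ℝ)| := by rw [Int.cast_abs]
      have hpi : (1:ℝ) ≤ 2 * Real.pi := by nlinarith [Real.pi_gt_three]
      rw [hnorm] at hd
      nlinarith
  set S := {t : ℝ | v t = v 0} with hS
  have hclosed : IsClosed S := isClosed_eq hv continuous_const
  have hopen : IsOpen S := by
    rw [Metric.isOpen_iff]
    intro t ht
    have hct : ContinuousAt v t := hv.continuousAt
    rw [Metric.continuousAt_iff] at hct
    obtain ⟨δ, hδ, hd⟩ := hct 1 one_pos
    refine ⟨δ, hδ, fun z hz => ?_⟩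
    have : dist (v z) (v t) < 1 := hd hz
    rw [dist_eq_norm] at this
    have := hgap z t this
    rw [hS]
    simp only [Set.mem_setOf_eq]
    rw [this]
    exact ht
  have : S = Set.univ := IsClopen.eq_univ ⟨hclosed, hopen⟩ ⟨0, rfl⟩
  have ha : a ∈ S := this ▸ Set.mem_univ a
  exact ha


lemma no_null_homotopy {k : ℕ} (hk : 1 ≤ k) (y₀ : Ck k)
    (F : C(I × Ck k, Ck k))
    (hF0 : ∀ z, F (0, z) = z) (hF1 : ∀ z, F (1, z) = y₀) : False := by
  set prj : ℝ → I := Set.projIcc 0 1 zero_le_one with hprj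
  set ept : ℝ → Ck k := fun t => ⟨eC k t, eC_mem hk t⟩ with hept
  set g : ℝ × ℝ → ℂ :=
    fun p => cf k ((F (prj p.1, ept (2 * Real.pi * p.2)) : Ck k) : E2) with hg
  have hgc : Continuous g := by
    apply (continuous_cf k).comp
    apply F.continuous.comp
    apply Continuous.prodMk
    · exact continuous_projIcc.comp continuous_fst
    · apply Continuous.subtype_mk
      exact (continuous_eC k).comp (continuous_const.mul continuous_snd)
  have hnorm : ∀ p, ‖g p‖ = 1 := fun p => norm_cf hk (F _).2
  have hprj0 : prj 0 = (0 : I) := by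
    rw [hprj]; exact Subtype.ext (by simp [Set.projIcc])
  have hprj1 : prj 1 = (1 : I) := by
    rw [hprj]; exact Subtype.ext (by simp [Set.projIcc])
  have hg0 : ∀ t : ℝ, g (0, t) = Complex.exp ((2 * Real.pi * t : ℝ) * Complex.I) := by
    intro t
    rw [hg]
    simp only
    rw [hprj0, hF0]
    rw [hept]
    simp only
    rw [cf_eC k hk]
  have hg1 : ∀ t : ℝ, g (1, t) = cf k (y₀ : E2) := by
    intro t
    rw [hg]
    simp only
    rw [hprj1, hF1]
  have hper : ∀ s : ℝ, g (s, 1) = g (s, 0) := by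
    intro s
    rw [hg, hept]
    simp only [mul_one, mul_zero]
    have hee : (⟨eC k (2 * Real.pi), eC_mem hk _⟩ : Ck k) = ⟨eC k 0, eC_mem hk _⟩ :=
      Subtype.ext (eC_periodic k)
    rw [hee]
  obtain ⟨h, hh, hexp⟩ := square_lift g hgc hnorm
  -- the three auxiliary functions
  set A : ℝ → ℂ := fun s => h (s, 1) - h (s, 0) with hA
  have hAc : Continuous A :=
    (hh.comp (continuous_id.prodMk continuous_const)).sub
      (hh.comp (continuous_id.prodMk continuous_const))
  have hA1 : ∀ s, Complex.exp (A s) = 1 := by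
    intro s
    rw [hA]
    simp only
    rw [Complex.exp_sub, hexp (s, 1), hexp (s, 0)]
    simp only
    rw [cl_one, cl_zero, hper]
    exact div_self (fun hzero => by simpa [hzero] using hnorm (cl s, 0))
  set B : ℝ → ℂ := fun t => h (1, t) - h (1, 0) with hB
  have hBc : Continuous B :=
    (hh.comp (continuous_const.prodMk continuous_id)).sub continuous_const
  have hB1 : ∀ t, Complex.exp (B t) = 1 := by
    intro t
    rw [hB]
    simp only
    rw [Complex.exp_sub, hexp (1, t), hexp (1, 0)]
    simp only
    rw [cl_one, cl_zero, hg1, hg1]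
    exact div_self (fun hzero => by
      have := norm_cf hk y₀.2
      rw [hzero] at this
      simpa using this)
  set G : ℝ → ℂ := fun t =>
    h (0, t) - ((2 * Real.pi * cl t : ℝ) : ℂ) * Complex.I - h (0, 0) with hG
  have hGc : Continuous G := by
    apply Continuous.sub _ continuous_const
    apply Continuous.sub (hh.comp (continuous_const.prodMk continuous_id))
    exact (Complex.continuous_ofReal.comp
      ((continuous_const.mul continuous_cl))).mul continuous_const
  have hG1 : ∀ t, Complex.exp (G t) = 1 := by
    intro t
    rw [hG]
    simp only
    rw [Complex.exp_sub, Complex.exp_sub, hexp (0, t), hexp (0, 0)]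
    simp only
    rw [cl_zero, hg0 (cl t), hg0 0]
    rw [mul_zero]
    simp only [Complex.ofReal_zero, zero_mul, Complex.exp_zero, div_one]
    exact div_self (Complex.exp_ne_zero _)
  -- evaluate
  have hGconst := const_of_exp_eq_one G hGc hG1 1
  have hG0 : G 0 = 0 := by
    rw [hG]; simp only
    rw [cl_zero]
    simp
  have hGone : G 1 = h (0, 1) - ((2 * Real.pi : ℝ) : ℂ) * Complex.I - h (0, 0) := by
    rw [hG]; simp only
    rw [cl_one]
    norm_num
  have hA0 : A 0 = ((2 * Real.pi : ℝ) : ℂ) * Complex.I := by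
    rw [hA]
    simp only
    have := hGconst
    rw [hG0, hGone] at this
    linear_combination this
  have hBconst := const_of_exp_eq_one B hBc hB1 1
  have hB0 : B 0 = 0 := by rw [hB]; simp
  have hA1' : A 1 = 0 := by
    rw [hA]
    simp only
    have := hBconst
    rw [hB0] at this
    rw [hB] at this
    simp only at this
    linear_combination this
  have hAconst := const_of_exp_eq_one A hAc hA1 1
  rw [hA1', hA0] at hAconst
  have : ((2 * Real.pi : ℝ) : ℂ) = 0 ∨ Complex.I = 0 := by
    rcases mul_eq_zero.mp hAconst.symm with h | h
    · exact Or.inl h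
    · exact Or.inr h
  rcases this with h | h
  · rw [Complex.ofReal_eq_zero] at h
    nlinarith [Real.pi_pos]
  · exact Complex.I_ne_zero h


end CHproof

local notation "E2" => EuclideanSpace ℝ (Fin 2)
open CHproof

/-- The unreduced cone over the 1-dimensional Hawaiian earring is contractible, yet its
1-dimensional Hawaiian group is nontrivial at some point `pt`: there is a continuous map
`f : ℋ¹ → C'(ℋ¹)` with `f θ = pt` which is not homotopic rel `{θ}` to the constant map. -/
theorem cone_hawaiian_contractible_nontrivial_hawaiianGroup :
    ContractibleSpace (UnreducedCone (Hawaiian 1)) ∧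
    ∃ (pt : UnreducedCone (Hawaiian 1)) (f : C(Hawaiian 1, UnreducedCone (Hawaiian 1))),
      f (hawaiianBase 1) = pt ∧
      ¬ f.HomotopicRel (ContinuousMap.const _ pt) {hawaiianBase 1} := by
  refine ⟨contractible_cone, ?_⟩
  set pt : UnreducedCone (Hawaiian 1) :=
    Quotient.mk (unreducedConeSetoid (Hawaiian 1)) (hawaiianBase 1, 0) with hpt
  have fcont : Continuous fun x : Hawaiian 1 =>
      Quotient.mk (unreducedConeSetoid (Hawaiian 1)) (x, (0:I)) := by
    exact continuous_quot_mk.comp (continuous_id.prodMk continuous_const)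
  set f : C(Hawaiian 1, UnreducedCone (Hawaiian 1)) :=
    ⟨fun x => Quotient.mk (unreducedConeSetoid (Hawaiian 1)) (x, 0), fcont⟩ with hf
  refine ⟨pt, f, rfl, ?_⟩
  rintro ⟨F⟩
  -- the composite homotopy into the geometric cone
  set hm : I × Hawaiian 1 → Cgeo := fun p => Phi (F p) with hhm
  have hmc : Continuous hm := Phi.continuous.comp F.continuous
  -- the open set where the height is < 1
  set W : Set (I × Hawaiian 1) := {q | ((hm q : E2 × ℝ)).2 ≠ 1} with hW
  have hWopen : IsOpen W := by
    have : Continuous fun q : I × Hawaiian 1 => ((hm q : E2 × ℝ)).2 :=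
      continuous_snd.comp (continuous_subtype_val.comp hmc)
    exact isOpen_ne.preimage this
  have hθ : ∀ s : I, hm (s, hawaiianBase 1) = Phi pt := by
    intro s
    rw [hhm]
    simp only
    rw [F.eq_fst s (Set.mem_singleton _)]
    rfl
  have hsub : (Set.univ ×ˢ ({hawaiianBase 1} : Set (Hawaiian 1))) ⊆ W := by
    rintro ⟨s, x⟩ ⟨-, hx⟩
    have hx' : x = hawaiianBase 1 := hx
    rw [hW]
    simp only [Set.mem_setOf_eq]
    rw [hx', hθ s, hpt, Phi_mk]
    norm_num
  obtain ⟨u, v, hu, hv, huu, hvv, huv⟩ :=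
    generalized_tube_lemma isCompact_univ isCompact_singleton hWopen hsub
  -- find a small circle inside v
  obtain ⟨ε, hε, hball⟩ := Metric.isOpen_iff.mp hv (hawaiianBase 1) (hvv rfl)
  obtain ⟨n, hn⟩ := exists_nat_one_div_lt (half_pos hε)
  set k : ℕ := n + 1 with hkdef
  have hk : 1 ≤ k := by omega
  have hkε : 2 / (k:ℝ) < ε := by
    have h1 : (1:ℝ) / k < ε / 2 := by exact_mod_cast hn
    have h2 : 2 / (k:ℝ) = 2 * (1 / k) := by ring
    linarith
  set inc : Ck k → Hawaiian 1 := fun z => ⟨(z : E2), Ck_subset_haw hk z.2⟩ with hinc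
  have hincv : ∀ z : Ck k, inc z ∈ v := by
    intro z
    apply hball
    rw [Metric.mem_ball, Subtype.dist_eq]
    have : dist ((z : E2)) ((hawaiianBase 1 : Hawaiian 1) : E2) = ‖(z : E2)‖ := by
      show dist ((z : E2)) (0 : E2) = _
      rw [dist_zero_right]
    rw [hinc]
    simp only
    rw [this]
    calc ‖(z : E2)‖ ≤ 2 / k := circle_norm_le _ k hk z.2
      _ < ε := hkε
  have hnot1 : ∀ (s : I) (z : Ck k), ((hm (s, inc z) : E2 × ℝ)).2 ≠ 1 := by
    intro s z
    exact huv ⟨huu (Set.mem_univ s), hincv z⟩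
  -- build the homotopy contracting the circle
  set q : I × Ck k → Cgeo := fun p => hm (p.1, inc p.2) with hq
  have hqc : Continuous q := by
    apply hmc.comp
    exact continuous_fst.prodMk ((continuous_subtype_val.comp continuous_snd).subtype_mk _)
  set tf : I × Ck k → ℝ := fun p => ((q p : E2 × ℝ)).2 with htf
  have htfc : Continuous tf := continuous_snd.comp (continuous_subtype_val.comp hqc)
  have htf1 : ∀ p, tf p ≠ 1 := fun p => hnot1 p.1 p.2
  set uf : I × Ck k → E2 := fun p => (1 - tf p)⁻¹ • ((q p : E2 × ℝ)).1 with huf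
  have hufc : Continuous uf := by
    refine Continuous.smul (f := fun p => (1 - tf p)⁻¹) (g := fun p => ((q p : E2 × ℝ)).1) ?_ ?_
    · exact ((continuous_const.sub htfc).inv₀ (fun p => sub_ne_zero.mpr
        (fun hh => htf1 p hh.symm)))
    · exact continuous_fst.comp (continuous_subtype_val.comp hqc)
  have hum : ∀ p, uf p ∈ Hawaiian 1 := by
    intro p
    obtain ⟨x, hx, t, ht', heq⟩ := (q p).2
    have h2 : tf p = t := by rw [htf]; simp only; rw [heq]
    have h1 : ((q p : E2 × ℝ)).1 = (1 - t) • (x : E2) := by rw [heq]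
    have hne : (1:ℝ) - t ≠ 0 := sub_ne_zero.mpr (fun hh => htf1 p (h2.trans hh.symm))
    rw [huf]
    simp only
    rw [h1, h2, smul_smul, inv_mul_cancel₀ hne, one_smul]
    exact hx
  set Kfun : I × Ck k → Ck k := fun p => ⟨rho' k ⟨uf p, hum p⟩, rho'_mem k _⟩ with hKfun
  have hKc : Continuous Kfun := by
    apply Continuous.subtype_mk
    exact (continuous_rho' hk).comp (hufc.subtype_mk _)
  -- endpoint computations
  have hq0 : ∀ z : Ck k, (q (0, z) : E2 × ℝ) = ((z : E2), 0) := by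
    intro z
    rw [hq, hhm]
    simp only
    rw [F.apply_zero]
    show (Phi (Quotient.mk _ (inc z, (0:I))) : E2 × ℝ) = _
    rw [Phi_mk]
    norm_num
    rfl
  have hq1 : ∀ z : Ck k, (q (1, z) : E2 × ℝ) = ((0 : E2), 0) := by
    intro z
    rw [hq, hhm]
    simp only
    rw [F.apply_one]
    show (Phi (Quotient.mk _ (hawaiianBase 1, (0:I))) : E2 × ℝ) = _
    rw [Phi_mk]
    norm_num
    rfl
  have rho'_of_mem : ∀ (y : Hawaiian 1), (y : E2) ∈ Ck k → rho' k y = (y : E2) := by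
    intro y hy
    unfold rho'
    rw [if_pos hy]
  have hK0 : ∀ z, Kfun (0, z) = z := by
    intro z
    rw [hKfun]
    apply Subtype.ext
    simp only
    have h2 : tf (0, z) = 0 := by rw [htf]; simp only; rw [hq0 z]
    have h1 : uf (0, z) = (z : E2) := by
      rw [huf]
      simp only
      rw [h2, hq0 z]
      norm_num
    have h3 := rho'_of_mem ⟨uf (0,z), hum (0,z)⟩ (by show uf (0,z) ∈ Ck k; rw [h1]; exact z.2)
    rw [h3]
    exact h1
  have hK1 : ∀ z, Kfun (1, z) = ⟨0, zero_mem_Ck k⟩ := by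
    intro z
    rw [hKfun]
    apply Subtype.ext
    simp only
    have h2 : tf (1, z) = 0 := by rw [htf]; simp only; rw [hq1 z]
    have h1 : uf (1, z) = (0 : E2) := by
      rw [huf]
      simp only
      rw [h2, hq1 z]
      norm_num
    have h3 := rho'_of_mem ⟨uf (1,z), hum (1,z)⟩ (by show uf (1,z) ∈ Ck k; rw [h1]; exact zero_mem_Ck k)
    rw [h3]
    exact h1
  exact no_null_homotopy hk ⟨0, zero_mem_Ck k⟩ ⟨Kfun, hKc⟩ hK0 hK1
end
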